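/- arXiv:2005.04826 — 3 statements merged into one kernel-verified Lean document; each statement's English description precedes it below -/
import Mathlib

section
/- Let w ≥ 1, x₀, x₁ ∈ (ℤ/2ℤ)^w, h₀, h₁ ∈ ℤ/2ℤ. Define the state vector over (m,d) ∈ ℤ/2ℤ × (ℤ/2ℤ)^w with amplitudes (1/√(2^{w+2}))·((−1)^{d·x₀+h₀} + (−1)^{m+d·x₁+h₁}). Then this vector is a unit vector, and measuring it in the computational basis yields an outcome (m,d) satisfying m = d·(x₀ + x₁) + h₀ + h₁ with probability 1; that is, the squared amplitudes of all (m,d) violating this equation sum to 0 and the remaining squared amplitudes sum to 1. -/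
/-- `(-1)^b` for a bit `b ∈ ℤ/2ℤ`. -/
def negOnePow₂ (b : ZMod 2) : ℝ := if b = 0 then 1 else -1

lemma negOnePow₂_ne {a b : ZMod 2} (h : a ≠ b) :
    negOnePow₂ a + negOnePow₂ b = 0 := by
  rcases (by decide : ∀ c : ZMod 2, c = 0 ∨ c = 1) a with ha | ha <;>
    rcases (by decide : ∀ c : ZMod 2, c = 0 ∨ c = 1) b with hb | hb <;>
    subst ha <;> subst hb <;> simp_all [negOnePow₂]

lemma negOnePow₂_sq (a : ZMod 2) : negOnePow₂ a * negOnePow₂ a = 1 := by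
  unfold negOnePow₂; split <;> ring

lemma zmod2_iff (m s0 s1 h0 h1 : ZMod 2) :
    (m = s0 + s1 + h0 + h1) ↔ (s0 + h0 = m + s1 + h1) := by
  revert m s0 s1 h0 h1; decide

/-- The state with amplitudes
`(1/√(2^{w+2})) ((−1)^{d·x₀+h₀} + (−1)^{m+d·x₁+h₁})` over `(m,d)` is a unit
vector, the squared amplitudes on outcomes violating
`m = d·(x₀+x₁) + h₀ + h₁` sum to `0`, and those satisfying it sum to `1`. -/
theorem measurement_satisfies_parity (w : ℕ) (hw : 1 ≤ w)
    (x₀ x₁ : Fin w → ZMod 2) (h₀ h₁ : ZMod 2) :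
    (∑ p : ZMod 2 × (Fin w → ZMod 2),
        ((1 / Real.sqrt (2 ^ (w + 2))) *
          (negOnePow₂ ((∑ i, p.2 i * x₀ i) + h₀)
            + negOnePow₂ (p.1 + (∑ i, p.2 i * x₁ i) + h₁))) ^ 2 = 1)
    ∧ (∑ p ∈ Finset.univ.filter
          (fun p : ZMod 2 × (Fin w → ZMod 2) =>
            p.1 ≠ (∑ i, p.2 i * (x₀ i + x₁ i)) + h₀ + h₁),
        ((1 / Real.sqrt (2 ^ (w + 2))) *
          (negOnePow₂ ((∑ i, p.2 i * x₀ i) + h₀)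
            + negOnePow₂ (p.1 + (∑ i, p.2 i * x₁ i) + h₁))) ^ 2 = 0)
    ∧ (∑ p ∈ Finset.univ.filter
          (fun p : ZMod 2 × (Fin w → ZMod 2) =>
            p.1 = (∑ i, p.2 i * (x₀ i + x₁ i)) + h₀ + h₁),
        ((1 / Real.sqrt (2 ^ (w + 2))) *
          (negOnePow₂ ((∑ i, p.2 i * x₀ i) + h₀)
            + negOnePow₂ (p.1 + (∑ i, p.2 i * x₁ i) + h₁))) ^ 2 = 1) := by
  set c : ℝ := 1 / Real.sqrt (2 ^ (w + 2)) with hc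
  have hsplit : ∀ d : Fin w → ZMod 2,
      (∑ i, d i * (x₀ i + x₁ i)) = (∑ i, d i * x₀ i) + (∑ i, d i * x₁ i) := by
    intro d
    simp [mul_add, Finset.sum_add_distrib]
  -- the amplitude function
  set f : ZMod 2 × (Fin w → ZMod 2) → ℝ := fun p =>
      (c * (negOnePow₂ ((∑ i, p.2 i * x₀ i) + h₀)
            + negOnePow₂ (p.1 + (∑ i, p.2 i * x₁ i) + h₁))) ^ 2 with hf
  have hviol : (∑ p ∈ Finset.univ.filter
          (fun p : ZMod 2 × (Fin w → ZMod 2) =>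
            p.1 ≠ (∑ i, p.2 i * (x₀ i + x₁ i)) + h₀ + h₁), f p) = 0 := by
    apply Finset.sum_eq_zero
    intro p hp
    rw [Finset.mem_filter] at hp
    have hne : ((∑ i, p.2 i * x₀ i) + h₀) ≠ (p.1 + (∑ i, p.2 i * x₁ i) + h₁) := by
      intro hEq
      exact hp.2 (by rw [hsplit]; exact (zmod2_iff _ _ _ _ _).mpr hEq)
    rw [hf]
    simp [negOnePow₂_ne hne]
  have hcsq : c ^ 2 = 1 / (2 : ℝ) ^ (w + 2) := by
    rw [hc, div_pow, one_pow, Real.sq_sqrt (by positivity)]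
  have hsat : (∑ p ∈ Finset.univ.filter
          (fun p : ZMod 2 × (Fin w → ZMod 2) =>
            p.1 = (∑ i, p.2 i * (x₀ i + x₁ i)) + h₀ + h₁), f p) = 1 := by
    rw [Finset.sum_filter, Fintype.sum_prod_type_right]
    have hterm : ∀ d : Fin w → ZMod 2,
        (∑ m : ZMod 2, if m = (∑ i, d i * (x₀ i + x₁ i)) + h₀ + h₁
            then f (m, d) else 0)
          = 1 / (2 : ℝ) ^ w := by
      intro d
      rw [Finset.sum_ite_eq', if_pos (Finset.mem_univ _)]
      have hEq : ((∑ i, d i * x₀ i) + h₀)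
          = ((∑ i, d i * (x₀ i + x₁ i)) + h₀ + h₁) + (∑ i, d i * x₁ i) + h₁ := by
        exact (zmod2_iff _ _ _ _ _).mp (by rw [hsplit])
      rw [hf]
      simp only [← hEq]
      rw [show (negOnePow₂ ((∑ i, d i * x₀ i) + h₀)
          + negOnePow₂ ((∑ i, d i * x₀ i) + h₀)) = 2 * negOnePow₂ ((∑ i, d i * x₀ i) + h₀) by ring]
      rw [mul_pow, mul_pow, hcsq, pow_two (negOnePow₂ _), negOnePow₂_sq, pow_add]
      norm_num
      ring
    rw [Finset.sum_congr rfl (fun d _ => hterm d)]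
    rw [Finset.sum_const, Finset.card_univ]
    have : Fintype.card (Fin w → ZMod 2) = 2 ^ w := by
      simp [Fintype.card_fun]
    rw [this]
    simp [nsmul_eq_mul]
  have htot : (∑ p : ZMod 2 × (Fin w → ZMod 2), f p) = 1 := by
    rw [← Finset.sum_filter_add_sum_filter_not Finset.univ
      (fun p : ZMod 2 × (Fin w → ZMod 2) =>
        p.1 = (∑ i, p.2 i * (x₀ i + x₁ i)) + h₀ + h₁) f]
    rw [hsat]
    have : (Finset.univ.filter (fun p : ZMod 2 × (Fin w → ZMod 2) =>
        ¬ p.1 = (∑ i, p.2 i * (x₀ i + x₁ i)) + h₀ + h₁))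
        = (Finset.univ.filter (fun p : ZMod 2 × (Fin w → ZMod 2) =>
        p.1 ≠ (∑ i, p.2 i * (x₀ i + x₁ i)) + h₀ + h₁)) := rfl
    rw [this, hviol]
    ring
  exact ⟨htot, hviol, hsat⟩
end

section
/- Let D be the truncated discrete Gaussian on ℤ_q^n with parameter B: D(x) = exp(−π‖x‖²/B²)/Z for ‖x‖ ≤ B√n and 0 otherwise, where Z normalizes. Then for any shift vector e ∈ ℤ^n with ‖e‖ ≤ δ·B·√n (δ ∈ (0,1)), the squared Hellinger distance between D and its shift D(· − e) satisfies 1 − H²(D, D(·−e)) ≥ exp(−2π·δ·n) · (fraction of mass in the intersection of supports); in particular the Hellinger distance tends to 0 as δ·n → 0. -/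
/-- Euclidean norm of an integer vector. -/
noncomputable def intNorm {n : ℕ} (x : Fin n → ℤ) : ℝ :=
  Real.sqrt (∑ i, ((x i : ℝ)) ^ 2)

/-- Unnormalized truncated Gaussian weight with parameter `B`. -/
noncomputable def gaussWeight {n : ℕ} (B : ℝ) (x : Fin n → ℤ) : ℝ :=
  if intNorm x ≤ B * Real.sqrt n then Real.exp (-Real.pi * intNorm x ^ 2 / B ^ 2) else 0

lemma intNorm_nonneg {n : ℕ} (x : Fin n → ℤ) : 0 ≤ intNorm x := Real.sqrt_nonneg _

lemma intNorm_eq_norm {n : ℕ} (x : Fin n → ℤ) :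
    intNorm x = ‖(WithLp.equiv 2 (Fin n → ℝ)).symm (fun i => (x i : ℝ))‖ := by
  rw [EuclideanSpace.norm_eq]
  simp [intNorm, Real.norm_eq_abs, sq_abs]

lemma intNorm_sub_le {n : ℕ} (x e : Fin n → ℤ) :
    intNorm (x - e) ≤ intNorm x + intNorm e := by
  have h := norm_sub_le ((WithLp.equiv 2 (Fin n → ℝ)).symm (fun i => (x i : ℝ)))
    ((WithLp.equiv 2 (Fin n → ℝ)).symm (fun i => (e i : ℝ)))
  rw [intNorm_eq_norm, intNorm_eq_norm, intNorm_eq_norm]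
  have hxe : (WithLp.equiv 2 (Fin n → ℝ)).symm (fun i => ((x - e) i : ℝ))
      = (WithLp.equiv 2 (Fin n → ℝ)).symm (fun i => (x i : ℝ))
        - (WithLp.equiv 2 (Fin n → ℝ)).symm (fun i => (e i : ℝ)) := by
    ext i
    simp [Pi.sub_apply]
  rw [hxe]
  exact h

lemma gaussWeight_nonneg {n : ℕ} (B : ℝ) (x : Fin n → ℤ) : 0 ≤ gaussWeight B x := by
  unfold gaussWeight; split <;> positivity

/-- For the truncated discrete Gaussian `D` with parameter `B`
(densities taken over a finite box `Λ` containing the support) and a shift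
`e` with `‖e‖ ≤ δ·B·√n`, `δ ∈ (0,1)`, the Hellinger affinity satisfies
`1 − H²(D, D(·−e)) = ∑ √(D x · D(x−e)) ≥ exp(−2πδn) ·` (mass of `D` on the
intersection of the two supports). -/
theorem truncated_gaussian_shift_hellinger (n : ℕ) (hn : 1 ≤ n)
    (B δ : ℝ) (hB : 0 < B) (hδ0 : 0 < δ) (hδ1 : δ < 1)
    (Λ : Finset (Fin n → ℤ))
    (hΛ : ∀ x : Fin n → ℤ, intNorm x ≤ 2 * B * Real.sqrt n → x ∈ Λ)
    (e : Fin n → ℤ) (he : intNorm e ≤ δ * B * Real.sqrt n)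
    (Z : ℝ) (hZ : Z = ∑ x ∈ Λ, gaussWeight B x) :
    Real.exp (-2 * Real.pi * δ * n) *
        ∑ x ∈ Λ, (if intNorm x ≤ B * Real.sqrt n ∧
            intNorm (x - e) ≤ B * Real.sqrt n then gaussWeight B x / Z else 0)
      ≤ ∑ x ∈ Λ, Real.sqrt ((gaussWeight B x / Z) * (gaussWeight B (x - e) / Z)) := by
  have hsq : (Real.sqrt n) ^ 2 = (n : ℝ) := Real.sq_sqrt (Nat.cast_nonneg n)
  have hsn : 0 ≤ Real.sqrt n := Real.sqrt_nonneg _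
  have hπ := Real.pi_pos
  have hB2 : (0:ℝ) < B ^ 2 := by positivity
  have h0mem : (0 : Fin n → ℤ) ∈ Λ := by
    apply hΛ
    have : intNorm (0 : Fin n → ℤ) = 0 := by simp [intNorm]
    rw [this]; positivity
  have hZpos : 0 < Z := by
    rw [hZ]
    apply Finset.sum_pos' (fun x _ => gaussWeight_nonneg B x)
    refine ⟨0, h0mem, ?_⟩
    have h0 : intNorm (0 : Fin n → ℤ) = 0 := by simp [intNorm]
    rw [gaussWeight, h0, if_pos (by positivity)]
    simp [Real.exp_pos]
  rw [Finset.mul_sum]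
  apply Finset.sum_le_sum
  intro x _
  by_cases hc : intNorm x ≤ B * Real.sqrt n ∧ intNorm (x - e) ≤ B * Real.sqrt n
  · rw [if_pos hc]
    obtain ⟨h1, h2⟩ := hc
    rw [gaussWeight, if_pos h1, gaussWeight, if_pos h2]
    set s := intNorm x with hs
    set t := intNorm e with ht
    set a := s ^ 2 with ha
    set b := intNorm (x - e) ^ 2 with hb
    have hen : 0 ≤ t := intNorm_nonneg e
    have hxn : 0 ≤ s := intNorm_nonneg x
    have hab : b ≤ (s + t) ^ 2 :=
      pow_le_pow_left₀ (intNorm_nonneg _) (intNorm_sub_le x e) 2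
    have hst : s * t ≤ δ * B ^ 2 * n := by
      calc s * t ≤ (B * Real.sqrt n) * (δ * B * Real.sqrt n) :=
            mul_le_mul h1 he hen (by positivity)
        _ = δ * B ^ 2 * (Real.sqrt n) ^ 2 := by ring
        _ = δ * B ^ 2 * n := by rw [hsq]
    have ht2 : t ^ 2 ≤ δ * B ^ 2 * n := by
      have hd : δ ^ 2 ≤ δ := by nlinarith
      calc t ^ 2 ≤ (δ * B * Real.sqrt n) ^ 2 := pow_le_pow_left₀ hen he 2
        _ = δ ^ 2 * (B ^ 2 * (Real.sqrt n) ^ 2) := by ring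
        _ = δ ^ 2 * (B ^ 2 * n) := by rw [hsq]
        _ ≤ δ * (B ^ 2 * n) := by
            apply mul_le_mul_of_nonneg_right hd (by positivity)
        _ = δ * B ^ 2 * n := by ring
    have hkey : b - a ≤ 4 * δ * n * B ^ 2 := by nlinarith
    have hA : Real.exp (-Real.pi * a / B ^ 2) / Z * (Real.exp (-Real.pi * b / B ^ 2) / Z)
        = (Real.exp ((-Real.pi * a / B ^ 2 + -Real.pi * b / B ^ 2) / 2) / Z) ^ 2 := by
      rw [div_pow, ← Real.exp_nat_mul]
      rw [div_mul_div_comm, ← Real.exp_add]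
      ring_nf
    rw [hA, Real.sqrt_sq (by positivity)]
    have hL : Real.exp (-2 * Real.pi * δ * n) * (Real.exp (-Real.pi * a / B ^ 2) / Z)
        = Real.exp (-2 * Real.pi * δ * n + -Real.pi * a / B ^ 2) / Z := by
      rw [Real.exp_add]; ring
    rw [hL]
    gcongr
    -- exponent inequality
    have hmul : Real.pi * b - Real.pi * a ≤ 4 * Real.pi * δ * n * B ^ 2 := by nlinarith
    have h3 : Real.pi * b / B ^ 2 - Real.pi * a / B ^ 2 ≤ 4 * Real.pi * δ * n := by
      rw [← sub_div, div_le_iff₀ hB2]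
      linarith [hmul]
    have e1 : -Real.pi * a / B ^ 2 = -(Real.pi * a / B ^ 2) := by ring
    have e2 : -Real.pi * b / B ^ 2 = -(Real.pi * b / B ^ 2) := by ring
    rw [e1, e2]
    linarith [h3]
  · rw [if_neg hc, mul_zero]
    positivity
end

section
/- Consider a game where a challenger picks a key k with trapdoor, a prover outputs λ tuples (yᵢ, mᵢ, dᵢ) with distinct yᵢ, and for each i the check passes with the parity condition involving two independent uniform hash bits unless both preimages were queried. If the prover never produces a claw (i.e., never queries both preimages of any yᵢ), then the number of passing checks is stochastically dominated by a Binomial(λ, 1/2) random variable, and hence the probability that more than 0.75λ checks pass is at most exp(−λ/8). -/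
open MeasureTheory

/-- Abstract probabilistic core of the soundness proof.  If a
prover never queries both preimages, each check outcome `Xᵢ` is a `{0,1}`-valued
random variable that, conditioned on the previous outcomes, equals `1` with
probability at most `1/2`; hence the number of passing checks is dominated by a
`Binomial(λ, 1/2)` variable and
`Pr[∑ Xᵢ > 0.75·λ] ≤ exp(−λ/8)`. -/
theorem soundness_check_count_bound (n : ℕ) (hn : 1 ≤ n)
    {Ω : Type*} [MeasurableSpace Ω] (μ : Measure Ω) [IsProbabilityMeasure μ]
    (X : Fin n → Ω → ℝ)
    (hmeas : ∀ i, Measurable (X i))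
    (h01 : ∀ i ω, X i ω = 0 ∨ X i ω = 1)
    (hcond : ∀ i : Fin n,
      μ[X i | ⨆ j : {j : Fin n // (j : ℕ) < (i : ℕ)},
          MeasurableSpace.comap (X j) inferInstance]
        ≤ᵐ[μ] fun _ => (1 / 2 : ℝ)) :
    (μ {ω | (0.75 : ℝ) * n < ∑ i, X i ω}).toReal ≤ Real.exp (-(n : ℝ) / 8) := by
  classical
  set t : ℝ := Real.log 3 with ht_def
  have hexp_t : Real.exp t = 3 := Real.exp_log (by norm_num)
  have ht0 : 0 ≤ t := Real.log_nonneg (by norm_num)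
  set f : Fin n → Ω → ℝ := fun i ω => 1 + 2 * X i ω with hf_def
  have hX0 : ∀ i ω, 0 ≤ X i ω := by
    intro i ω; rcases h01 i ω with h | h <;> simp [h]
  have hX1 : ∀ i ω, X i ω ≤ 1 := by
    intro i ω; rcases h01 i ω with h | h <;> simp [h]
  have hf_eq : ∀ i ω, Real.exp (t * X i ω) = f i ω := by
    intro i ω; rcases h01 i ω with h | h <;> simp [hf_def, h, hexp_t] <;> norm_num
  have hf1 : ∀ i ω, 1 ≤ f i ω := by
    intro i ω; have := hX0 i ω; simp only [hf_def]; linarith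
  have hf3 : ∀ i ω, f i ω ≤ 3 := by
    intro i ω; have := hX1 i ω; simp only [hf_def]; linarith
  -- sub-σ-algebras
  set m : Fin n → MeasurableSpace Ω := fun i =>
    ⨆ j : {j : Fin n // (j : ℕ) < (i : ℕ)},
      MeasurableSpace.comap (X j) inferInstance with hm_def
  have hm_le : ∀ i, m i ≤ ‹MeasurableSpace Ω› := by
    intro i
    exact iSup_le fun j => measurable_iff_comap_le.mp (hmeas j)
  have hXj_meas : ∀ (i j : Fin n), (j : ℕ) < (i : ℕ) → Measurable[m i] (X j) := by
    intro i j hj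
    refine measurable_iff_comap_le.mpr ?_
    exact le_iSup (fun j : {j : Fin n // (j : ℕ) < (i : ℕ)} =>
      MeasurableSpace.comap (X j) inferInstance) ⟨j, hj⟩
  -- partial products
  set G : ℕ → Ω → ℝ := fun k ω =>
    ∏ i ∈ Finset.univ.filter (fun i : Fin n => (i : ℕ) < k), f i ω with hG_def
  have hG_nonneg : ∀ k ω, 0 ≤ G k ω := by
    intro k ω
    exact Finset.prod_nonneg fun i _ => le_trans zero_le_one (hf1 i ω)
  have hG_le : ∀ k ω, G k ω ≤ 3 ^ n := by
    intro k ω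
    simp only [hG_def]
    calc (∏ i ∈ Finset.univ.filter (fun i : Fin n => (i : ℕ) < k), f i ω)
        ≤ ∏ _i ∈ Finset.univ.filter (fun i : Fin n => (i : ℕ) < k), (3 : ℝ) :=
          Finset.prod_le_prod (fun i _ => le_trans zero_le_one (hf1 i ω))
            (fun i _ => hf3 i ω)
      _ = 3 ^ (Finset.univ.filter (fun i : Fin n => (i : ℕ) < k)).card :=
          Finset.prod_const 3
      _ ≤ 3 ^ n := by
          apply pow_le_pow_right₀ (by norm_num)
          calc (Finset.univ.filter (fun i : Fin n => (i : ℕ) < k)).card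
              ≤ (Finset.univ : Finset (Fin n)).card := Finset.card_filter_le _ _
            _ = n := by simp
  have hG_meas : ∀ k, Measurable (G k) := by
    intro k
    exact Finset.measurable_prod _ fun i _ => ((hmeas i).const_mul 2).const_add 1
  have hbdd_int : ∀ (g : Ω → ℝ) (C : ℝ), Measurable g → (∀ ω, ‖g ω‖ ≤ C) →
      Integrable g μ := by
    intro g C hg hC
    exact ⟨hg.aestronglyMeasurable, HasFiniteIntegral.of_bounded (C := C)
      (Filter.Eventually.of_forall hC)⟩
  have hG_int : ∀ k, Integrable (G k) μ := by
    intro k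
    refine hbdd_int _ (3 ^ n) (hG_meas k) fun ω => ?_
    rw [Real.norm_eq_abs, abs_of_nonneg (hG_nonneg k ω)]
    exact hG_le k ω
  -- the induction bound on the mgf-type product
  have main : ∀ k, k ≤ n → ∫ ω, G k ω ∂μ ≤ 2 ^ k := by
    intro k hk
    induction k with
    | zero =>
        have : G 0 = fun _ => (1 : ℝ) := by
          funext ω
          simp [hG_def]
        rw [this]
        simp
    | succ k ih =>
        have hkn : k < n := hk
        set i : Fin n := ⟨k, hkn⟩ with hi_def
        have hfilter : Finset.univ.filter (fun j : Fin n => (j : ℕ) < k + 1)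
            = insert i (Finset.univ.filter (fun j : Fin n => (j : ℕ) < k)) := by
          ext j
          simp only [Finset.mem_filter, Finset.mem_univ, true_and, Finset.mem_insert]
          constructor
          · intro hj
            rcases Nat.lt_succ_iff_lt_or_eq.mp hj with h | h
            · exact Or.inr (by simpa using h)
            · exact Or.inl (by apply Fin.ext; simpa using h)
          · rintro (rfl | h)
            · exact Nat.lt_succ_self k
            · exact Nat.lt_succ_of_lt h
        have hsplit : ∀ ω, G (k + 1) ω = G k ω + 2 * (G k ω * X i ω) := by
          intro ω
          have hnotmem : i ∉ Finset.univ.filter (fun j : Fin n => (j : ℕ) < k) := by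
            simp [hi_def]
          simp only [hG_def, hfilter, Finset.prod_insert hnotmem]
          simp only [hf_def]
          ring
        -- strong measurability of G k w.r.t. m i
        have hGk_sm : StronglyMeasurable[m i] (G k) := by
          refine Measurable.stronglyMeasurable ?_
          refine Finset.measurable_prod _ fun j hj => ?_
          have hji : (j : ℕ) < (i : ℕ) := by
            exact (Finset.mem_filter.mp hj).2
          exact ((hXj_meas i j hji).const_mul 2).const_add 1
        have hXi_int : Integrable (X i) μ := by
          refine hbdd_int _ 1 (hmeas i) fun ω => ?_
          rw [Real.norm_eq_abs, abs_of_nonneg (hX0 i ω)]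
          exact hX1 i ω
        have hGkXi_int : Integrable (G k * X i) μ := by
          refine hbdd_int _ (3 ^ n) ((hG_meas k).mul (hmeas i)) fun ω => ?_
          simp only [Pi.mul_apply, Real.norm_eq_abs,
            abs_of_nonneg (mul_nonneg (hG_nonneg k ω) (hX0 i ω))]
          calc G k ω * X i ω ≤ G k ω * 1 :=
                mul_le_mul_of_nonneg_left (hX1 i ω) (hG_nonneg k ω)
            _ = G k ω := mul_one _
            _ ≤ 3 ^ n := hG_le k ω
        have hpull := condExp_mul_of_stronglyMeasurable_left hGk_sm hGkXi_int hXi_int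
        have hGcond_int : Integrable (fun ω => G k ω * (μ[X i | m i]) ω) μ := by
          refine Integrable.bdd_mul (c := 3 ^ n) integrable_condExp
            (hG_meas k).aestronglyMeasurable (Filter.Eventually.of_forall fun ω => ?_)
          rw [Real.norm_eq_abs, abs_of_nonneg (hG_nonneg k ω)]
          exact hG_le k ω
        have key : ∫ ω, G k ω * X i ω ∂μ ≤ (1 / 2) * ∫ ω, G k ω ∂μ := by
          have h1 : ∫ ω, G k ω * X i ω ∂μ = ∫ ω, (μ[G k * X i | m i]) ω ∂μ :=
            (integral_condExp (hm_le i)).symm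
          have h2 : ∫ ω, (μ[G k * X i | m i]) ω ∂μ
              = ∫ ω, G k ω * (μ[X i | m i]) ω ∂μ := integral_congr_ae hpull
          rw [h1, h2]
          have h3 : ∫ ω, G k ω * (μ[X i | m i]) ω ∂μ
              ≤ ∫ ω, G k ω * (1 / 2 : ℝ) ∂μ := by
            refine integral_mono_ae hGcond_int ((hG_int k).mul_const _) ?_
            filter_upwards [hcond i] with ω hω
            exact mul_le_mul_of_nonneg_left hω (hG_nonneg k ω)
          calc ∫ ω, G k ω * (μ[X i | m i]) ω ∂μ ≤ ∫ ω, G k ω * (1 / 2 : ℝ) ∂μ := h3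
            _ = (1 / 2) * ∫ ω, G k ω ∂μ := by rw [integral_mul_const]; ring
        have hInt_eq : ∫ ω, G (k + 1) ω ∂μ
            = (∫ ω, G k ω ∂μ) + 2 * ∫ ω, G k ω * X i ω ∂μ := by
          have h1 : ∫ ω, G (k + 1) ω ∂μ
              = ∫ ω, (G k ω + 2 * (G k * X i) ω) ∂μ := by
            congr 1; funext ω; simp only [Pi.mul_apply]; exact hsplit ω
          rw [h1, integral_add (hG_int k) (hGkXi_int.const_mul 2),
            integral_const_mul]
          simp only [Pi.mul_apply]
        have ihk := ih (le_of_lt hkn)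
        rw [hInt_eq]
        have : ∫ ω, G k ω ∂μ ≤ 2 ^ k := ihk
        calc (∫ ω, G k ω ∂μ) + 2 * ∫ ω, G k ω * X i ω ∂μ
            ≤ (∫ ω, G k ω ∂μ) + 2 * ((1 / 2) * ∫ ω, G k ω ∂μ) := by linarith
          _ = 2 * ∫ ω, G k ω ∂μ := by ring
          _ ≤ 2 ^ (k + 1) := by rw [pow_succ]; linarith
  -- the sum variable
  set S : Ω → ℝ := fun ω => ∑ i, X i ω with hS_def
  have hS_exp : ∀ ω, Real.exp (t * S ω) = G n ω := by
    intro ω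
    have : t * S ω = ∑ i, t * X i ω := by rw [hS_def]; exact Finset.mul_sum _ _ _
    rw [this, Real.exp_sum]
    have hGn : G n ω = ∏ i, f i ω := by
      simp only [hG_def]
      congr 1
      exact Finset.filter_true_of_mem fun i _ => i.isLt
    rw [hGn]
    exact Finset.prod_congr rfl fun i _ => hf_eq i ω
  have h_int : Integrable (fun ω => Real.exp (t * S ω)) μ := by
    have : (fun ω => Real.exp (t * S ω)) = G n := funext hS_exp
    rw [this]; exact hG_int n
  have hmgf : ProbabilityTheory.mgf S μ t ≤ 2 ^ n := by
    have : ProbabilityTheory.mgf S μ t = ∫ ω, G n ω ∂μ := by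
      unfold ProbabilityTheory.mgf
      exact integral_congr_ae (Filter.Eventually.of_forall fun ω => hS_exp ω)
    rw [this]
    exact main n le_rfl
  have hchernoff := ProbabilityTheory.measure_ge_le_exp_mul_mgf
    (X := S) (μ := μ) (t := t) ((0.75 : ℝ) * n) ht0 h_int
  -- numeric inequality
  have hkey : Real.log 2 + 1 / 8 ≤ 0.75 * Real.log 3 := by
    have h1 : Real.exp (1 / 2) ^ 2 = Real.exp 1 := by
      rw [← Real.exp_nat_mul]; norm_num
    have h2 : Real.exp (1 / 2) ≤ 27 / 16 := by
      nlinarith [Real.exp_pos (1 / 2 : ℝ), Real.exp_one_lt_d9]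
    have h3 : (1 / 2 : ℝ) ≤ Real.log (27 / 16) :=
      (Real.le_log_iff_exp_le (by norm_num)).mpr h2
    have h4 : Real.log ((27 : ℝ) / 16) = 3 * Real.log 3 - 4 * Real.log 2 := by
      rw [show (27 : ℝ) / 16 = 3 ^ (3 : ℕ) / 2 ^ (4 : ℕ) by norm_num,
        Real.log_div (by norm_num) (by norm_num), Real.log_pow, Real.log_pow]
      push_cast; ring
    rw [h4] at h3
    linarith
  have hn' : (1 : ℝ) ≤ (n : ℝ) := by exact_mod_cast hn
  have hfinal : Real.exp (-t * ((0.75 : ℝ) * n)) * 2 ^ n ≤ Real.exp (-(n : ℝ) / 8) := by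
    have h2n : (2 : ℝ) ^ n = Real.exp ((n : ℝ) * Real.log 2) := by
      rw [Real.exp_nat_mul, Real.exp_log (by norm_num)]
    rw [h2n, ← Real.exp_add, Real.exp_le_exp]
    have : -t * ((0.75 : ℝ) * n) + (n : ℝ) * Real.log 2
        = (n : ℝ) * (Real.log 2 - 0.75 * Real.log 3) := by rw [ht_def]; ring
    rw [this]
    calc (n : ℝ) * (Real.log 2 - 0.75 * Real.log 3) ≤ (n : ℝ) * (-(1 / 8)) := by
          apply mul_le_mul_of_nonneg_left (by linarith) (by linarith)
      _ = -(n : ℝ) / 8 := by ring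
  calc (μ {ω | (0.75 : ℝ) * n < ∑ i, X i ω}).toReal
      ≤ (μ {ω | (0.75 : ℝ) * n ≤ S ω}).toReal := by
        apply ENNReal.toReal_mono (measure_ne_top μ _)
        apply measure_mono
        intro ω hω
        simp only [Set.mem_setOf_eq] at hω ⊢
        exact le_of_lt hω
    _ ≤ Real.exp (-t * ((0.75 : ℝ) * n)) * ProbabilityTheory.mgf S μ t := hchernoff
    _ ≤ Real.exp (-t * ((0.75 : ℝ) * n)) * 2 ^ n := by
        apply mul_le_mul_of_nonneg_left hmgf (Real.exp_pos _).le
    _ ≤ Real.exp (-(n : ℝ) / 8) := hfinal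
end
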